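/- Let μ and μ₁ be probability measures on ℝ with finite first moments such that μ ⪯ μ₁ in convex order. Then for every n > 0, μ(ℝ \ [−(n+1), n+1]) ≤ ∫ (|x| − n)₊ dμ₁. In particular, the family {μ : μ ⪯ μ₁} is uniformly tight. -/

import Mathlib

open MeasureTheory Set

/-- The convex order on probability measures on `ℝ`: `μ ⪯ ν` iff `∫ φ dμ ≤ ∫ φ dν`
for all convex functions `φ` for which both integrals exist. -/
def ConvexOrder (μ ν : Measure ℝ) : Prop :=
  ∀ φ : ℝ → ℝ, ConvexOn ℝ Set.univ φ → Integrable φ μ → Integrable φ ν →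
    ∫ x, φ x ∂μ ≤ ∫ x, φ x ∂ν

lemma phi_convex (n : ℝ) : ConvexOn ℝ Set.univ (fun x : ℝ => max (|x| - n) 0) := by
  have habs : ConvexOn ℝ Set.univ (fun x : ℝ => |x|) := by
    exact convexOn_univ_norm (E := ℝ)
  exact (habs.sub (concaveOn_const n convex_univ)).sup (convexOn_const 0 convex_univ)

lemma phi_meas (n : ℝ) : Measurable (fun x : ℝ => max (|x| - n) 0) :=
  (measurable_abs.sub measurable_const).max measurable_const

lemma phi_int {μ : Measure ℝ} (h : Integrable (fun x => |x|) μ) {n : ℝ} (hn : 0 ≤ n) :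
    Integrable (fun x => max (|x| - n) 0) μ := by
  refine h.mono (phi_meas n).aestronglyMeasurable ?_
  filter_upwards with x
  rw [Real.norm_eq_abs, Real.norm_eq_abs, abs_abs, abs_of_nonneg (le_max_right _ _)]
  exact max_le (by linarith [abs_nonneg x]) (abs_nonneg x)

lemma tail_bound (μ : Measure ℝ) [IsProbabilityMeasure μ]
    (hμ : Integrable (fun x => |x|) μ) {n : ℝ} (hn : 0 < n) :
    (μ (Icc (-(n + 1)) (n + 1))ᶜ).toReal ≤ ∫ x, max (|x| - n) 0 ∂μ := by
  have hS : MeasurableSet (Icc (-(n + 1)) (n + 1))ᶜ := measurableSet_Icc.compl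
  have h1 : (μ (Icc (-(n + 1)) (n + 1))ᶜ).toReal
      = ∫ x, (Icc (-(n + 1)) (n + 1))ᶜ.indicator (fun _ => (1:ℝ)) x ∂μ := by
    rw [integral_indicator_const (1:ℝ) hS, smul_eq_mul, mul_one]
    rfl
  rw [h1]
  refine integral_mono ((integrable_const 1).indicator hS) (phi_int hμ hn.le) ?_
  intro x
  by_cases hx : x ∈ (Icc (-(n + 1)) (n + 1))ᶜ
  · rw [indicator_of_mem hx]
    have hx' : x < -(n+1) ∨ n+1 < x := by
      rw [Set.mem_compl_iff, Set.mem_Icc, not_and_or, not_le, not_le] at hx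
      exact hx
    have : n + 1 ≤ |x| := by
      rcases abs_cases x with ⟨h, _⟩ | ⟨h, _⟩ <;> rcases hx' with h' | h' <;> linarith
    exact le_max_of_le_left (by linarith)
  · rw [indicator_of_notMem hx]
    exact le_max_right _ _

/-- If `μ ⪯ μ₁` in convex order, then for every `n > 0`,
`μ(ℝ \ [−(n+1), n+1]) ≤ ∫ (|x| − n)₊ dμ₁`.  In particular the family
`{μ : μ ⪯ μ₁}` is uniformly tight. -/
theorem convex_order_tail_bound_and_tightness
    (μ1 : Measure ℝ) [IsProbabilityMeasure μ1] (hμ1 : Integrable (fun x => |x|) μ1) :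
    (∀ (μ : Measure ℝ) [IsProbabilityMeasure μ], Integrable (fun x => |x|) μ →
      ConvexOrder μ μ1 → ∀ n : ℝ, 0 < n →
        (μ (Icc (-(n + 1)) (n + 1))ᶜ).toReal ≤ ∫ x, max (|x| - n) 0 ∂μ1) ∧
    (∀ ε : ℝ, 0 < ε → ∃ K : Set ℝ, IsCompact K ∧
      ∀ (μ : Measure ℝ) [IsProbabilityMeasure μ], Integrable (fun x => |x|) μ →
        ConvexOrder μ μ1 → (μ Kᶜ).toReal ≤ ε) := by
  have main : ∀ (μ : Measure ℝ) [IsProbabilityMeasure μ], Integrable (fun x => |x|) μ →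
      ConvexOrder μ μ1 → ∀ n : ℝ, 0 < n →
        (μ (Icc (-(n + 1)) (n + 1))ᶜ).toReal ≤ ∫ x, max (|x| - n) 0 ∂μ1 := by
    intro μ _ hμ hco n hn
    exact (tail_bound μ hμ hn).trans
      (hco _ (phi_convex n) (phi_int hμ hn.le) (phi_int hμ1 hn.le))
  refine ⟨main, fun ε hε => ?_⟩
  have htend : Filter.Tendsto (fun n : ℕ => ∫ x, max (|x| - n) 0 ∂μ1)
      Filter.atTop (nhds 0) := by
    have := tendsto_integral_of_dominated_convergence (μ := μ1)
      (F := fun (n : ℕ) (x : ℝ) => max (|x| - n) 0) (f := fun _ => (0:ℝ))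
      (bound := fun x => |x|)
      (fun n => (phi_meas n).aestronglyMeasurable) hμ1
      (fun n => by
        filter_upwards with x
        rw [Real.norm_eq_abs, abs_of_nonneg (le_max_right _ _)]
        exact max_le (by have := Nat.cast_nonneg (α := ℝ) n; linarith [abs_nonneg x])
          (abs_nonneg x))
      (by
        filter_upwards with x
        have : ∀ᶠ n : ℕ in Filter.atTop, max (|x| - n) 0 = 0 := by
          filter_upwards [Filter.eventually_ge_atTop ⌈|x|⌉₊] with n hn
          have : |x| ≤ (n : ℝ) := le_trans (Nat.le_ceil _) (by exact_mod_cast hn)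
          exact max_eq_right (by linarith)
        exact Filter.Tendsto.congr' (this.mono fun n h => h.symm) tendsto_const_nhds)
    simpa using this
  obtain ⟨n, hn1, hn2⟩ :=
    ((htend.eventually (gt_mem_nhds hε)).and (Filter.eventually_ge_atTop 1)).exists
  refine ⟨Icc (-((n:ℝ) + 1)) ((n:ℝ) + 1), isCompact_Icc, fun μ _ hμ hco => ?_⟩
  have hn0 : (0:ℝ) < n := by exact_mod_cast hn2
  exact (main μ hμ hco n hn0).trans hn1.le
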